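/- arXiv:math/0211197 — 2 statements merged into one kernel-verified Lean document; each statement's English description precedes it below -/
import Mathlib

section
/- Let n ≥ 2 and let B_n be the Artin braid group with standard generators σ_1, …, σ_{n−1}. Let W be a positive braid, i.e., an element of the submonoid B_n^+ of B_n generated by σ_1, …, σ_{n−1}. If W · σ_i^m = σ_j^m · W for some indices 1 ≤ i, j ≤ n−1 and some integer m ≥ 1, then W · σ_i = σ_j · W. -/
/-- The braid relations on the free group on `m` generators, as relator words:
`σᵢσⱼσᵢ⁻¹σⱼ⁻¹` for `|i - j| ≥ 2` and `σᵢσⱼσᵢ(σⱼσᵢσⱼ)⁻¹` for `j = i + 1`. -/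
def braidRels (m : ℕ) : Set (FreeGroup (Fin m)) :=
  { r | ∃ i j : Fin m,
      ((i : ℕ) + 2 ≤ (j : ℕ) ∧
        r = .of i * .of j * (.of i)⁻¹ * (.of j)⁻¹) ∨
      ((j : ℕ) = (i : ℕ) + 1 ∧
        r = .of i * .of j * .of i * (.of j * .of i * .of j)⁻¹) }

/-- The Artin braid group `B_n`, presented over `Fin (n - 1)`. -/
def BraidGroup (n : ℕ) : Type := PresentedGroup (braidRels (n - 1))

instance (n : ℕ) : Group (BraidGroup n) := by unfold BraidGroup; infer_instance

/-- The standard Artin generator `σ_{i+1}` (0-indexed by `i : Fin (n - 1)`,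
so `braidGen n ⟨0, _⟩` is `σ_1`). -/
def braidGen (n : ℕ) (i : Fin (n - 1)) : BraidGroup n := PresentedGroup.of i


namespace Braid

/-- Far-apart generator indices (commuting). -/
def Far (a b : ℕ) : Prop := a + 2 ≤ b ∨ b + 2 ≤ a

/-- Adjacent generator indices (braiding). -/
def Adj (a b : ℕ) : Prop := b = a + 1 ∨ a = b + 1

instance : ∀ a b, Decidable (Adj a b) := fun a b => inferInstanceAs (Decidable (_ ∨ _))

lemma Far.symm {a b : ℕ} (h : Far a b) : Far b a := h.elim .inr .inl
lemma Adj.symm {a b : ℕ} (h : Adj a b) : Adj b a := h.elim .inr .inl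
lemma Far.ne {a b : ℕ} (h : Far a b) : a ≠ b := by rcases h with h|h <;> omega
lemma Adj.ne {a b : ℕ} (h : Adj a b) : a ≠ b := by rcases h with h|h <;> omega
lemma Adj.not_far {a b : ℕ} (h : Adj a b) : ¬ Far a b := by
  rcases h with h|h <;> rintro (h'|h') <;> omega
lemma trichotomy (a b : ℕ) : a = b ∨ Adj a b ∨ Far a b := by
  unfold Adj Far; omega
lemma adj_adj_adj {a b c : ℕ} (h1 : Adj a b) (h2 : Adj b c) (h3 : Adj a c) : False := by
  rcases h1 with h1|h1 <;> rcases h2 with h2|h2 <;> rcases h3 with h3|h3 <;> omega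

/-- Elementary braid relations on words. -/
inductive BR : List ℕ → List ℕ → Prop
  | comm {a b : ℕ} : Far a b → BR [a, b] [b, a]
  | braid {a b : ℕ} : Adj a b → BR [a, b, a] [b, a, b]

lemma BR.symm {x y : List ℕ} (h : BR x y) : BR y x := by
  cases h with
  | comm h => exact .comm h.symm
  | braid h => exact .braid h.symm

/-- One rewriting step. -/
def Step (u v : List ℕ) : Prop :=
  ∃ p q x y, BR x y ∧ u = p ++ x ++ q ∧ v = p ++ y ++ q

lemma Step.symm {u v : List ℕ} (h : Step u v) : Step v u := by
  obtain ⟨p, q, x, y, hr, hu, hv⟩ := h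
  exact ⟨p, q, y, x, hr.symm, hv, hu⟩

/-- Positive braid word equivalence. -/
def Beq : List ℕ → List ℕ → Prop := Relation.ReflTransGen Step

infix:50 " ∼ " => Beq

lemma Beq.rfl {u : List ℕ} : u ∼ u := Relation.ReflTransGen.refl
lemma Beq.trans {u v w : List ℕ} (h : u ∼ v) (h' : v ∼ w) : u ∼ w :=
  Relation.ReflTransGen.trans h h'
lemma Beq.symm {u v : List ℕ} (h : u ∼ v) : v ∼ u :=
  (@Relation.ReflTransGen.symmetric _ Step ⟨fun _ _ => Step.symm⟩).symm _ _ h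
lemma Step.beq {u v : List ℕ} (h : Step u v) : u ∼ v := Relation.ReflTransGen.single h

lemma Step.append_left {u v : List ℕ} (w : List ℕ) (h : Step u v) :
    Step (w ++ u) (w ++ v) := by
  obtain ⟨p, q, x, y, hr, hu, hv⟩ := h
  exact ⟨w ++ p, q, x, y, hr, by simp [hu], by simp [hv]⟩

lemma Step.append_right {u v : List ℕ} (w : List ℕ) (h : Step u v) :
    Step (u ++ w) (v ++ w) := by
  obtain ⟨p, q, x, y, hr, hu, hv⟩ := h
  exact ⟨p, q ++ w, x, y, hr, by simp [hu], by simp [hv]⟩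

lemma Beq.append_left {u v : List ℕ} (w : List ℕ) (h : u ∼ v) : w ++ u ∼ w ++ v :=
  Relation.ReflTransGen.lift _ (fun _ _ h => Step.append_left w h) _ _ h

lemma Beq.append_right {u v : List ℕ} (w : List ℕ) (h : u ∼ v) : u ++ w ∼ v ++ w :=
  Relation.ReflTransGen.lift _ (fun _ _ h => Step.append_right w h) _ _ h

lemma Beq.append {u v u' v' : List ℕ} (h : u ∼ v) (h' : u' ∼ v') : u ++ u' ∼ v ++ v' :=
  (h.append_right u').trans (h'.append_left v)

lemma Beq.cons {u v : List ℕ} (a : ℕ) (h : u ∼ v) : a :: u ∼ a :: v :=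
  h.append_left [a]

lemma swap_cons {a b : ℕ} (h : Far a b) (l : List ℕ) : a :: b :: l ∼ b :: a :: l :=
  Step.beq ⟨[], l, [a, b], [b, a], .comm h, rfl, rfl⟩

lemma braid_cons {a b : ℕ} (h : Adj a b) (l : List ℕ) :
    a :: b :: a :: l ∼ b :: a :: b :: l :=
  Step.beq ⟨[], l, [a, b, a], [b, a, b], .braid h, rfl, rfl⟩

lemma BR.length {x y : List ℕ} (h : BR x y) : x.length = y.length := by
  cases h <;> rfl

lemma Step.length {u v : List ℕ} (h : Step u v) : u.length = v.length := by
  obtain ⟨p, q, x, y, hr, hu, hv⟩ := h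
  simp [hu, hv, hr.length]

lemma Beq.length {u v : List ℕ} (h : u ∼ v) : u.length = v.length := by
  induction h with
  | refl => rfl
  | tail _ h ih => exact ih.trans h.length

lemma BR.mem {x y : List ℕ} (h : BR x y) {c : ℕ} (hc : c ∈ y) : c ∈ x := by
  cases h <;> simp at hc ⊢ <;> tauto

lemma Step.bound {u v : List ℕ} (h : Step u v) {m : ℕ} (hb : ∀ x ∈ u, x < m) :
    ∀ x ∈ v, x < m := by
  obtain ⟨p, q, x, y, hr, hu, hv⟩ := h
  subst hu hv
  intro c hc
  simp only [List.mem_append] at hc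
  rcases hc with (hc | hc) | hc
  · exact hb c (by simp [hc])
  · exact hb c (by simp [hr.mem hc])
  · exact hb c (by simp [hc])

lemma Beq.bound {u v : List ℕ} (h : u ∼ v) {m : ℕ} (hb : ∀ x ∈ u, x < m) :
    ∀ x ∈ v, x < m := by
  induction h with
  | refl => exact hb
  | tail _ h ih => exact h.bound ih

lemma BR.rev {x y : List ℕ} (h : BR x y) : BR x.reverse y.reverse := by
  cases h with
  | comm h => exact .comm h.symm
  | braid h => simpa using .braid h

lemma Step.rev {u v : List ℕ} (h : Step u v) : Step u.reverse v.reverse := by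
  obtain ⟨p, q, x, y, hr, hu, hv⟩ := h
  exact ⟨q.reverse, p.reverse, x.reverse, y.reverse, hr.rev, by simp [hu], by simp [hv]⟩

lemma Beq.rev {u v : List ℕ} (h : u ∼ v) : u.reverse ∼ v.reverse :=
  Relation.ReflTransGen.lift _ (fun _ _ h => Step.rev h) _ _ h

end Braid

namespace Braid

/-- The complement: `lcm(σa,σb) = σa * prod (comp a b)`. -/
def comp (a b : ℕ) : List ℕ :=
  if a = b then [] else if Adj a b then [b, a] else [b]

@[simp] lemma comp_self (a : ℕ) : comp a a = [] := by simp [comp]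

instance : Trans Beq Beq Beq := ⟨Beq.trans⟩

lemma comp_adj {a b : ℕ} (h : Adj a b) : comp a b = [b, a] := by
  simp [comp, h.ne, h]

lemma comp_far {a b : ℕ} (h : Far a b) : comp a b = [b] := by
  have : ¬ Adj a b := fun ha => ha.not_far h
  simp [comp, h.ne, this]

lemma key : ∀ (N : ℕ) (X : List ℕ) (a b : ℕ) (Y : List ℕ), X.length ≤ N →
    (a :: X) ∼ (b :: Y) → ∃ Z, X ∼ comp a b ++ Z ∧ Y ∼ comp b a ++ Z := by
  intro N
  induction N using Nat.strong_induction_on with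
  | _ N IH =>
  have KEY : ∀ {X₁ : List ℕ} {a₁ b₁ : ℕ} {Y₁ : List ℕ}, X₁.length + 1 ≤ N →
      (a₁ :: X₁) ∼ (b₁ :: Y₁) → ∃ Z, X₁ ∼ comp a₁ b₁ ++ Z ∧ Y₁ ∼ comp b₁ a₁ ++ Z :=
    fun {X₁ a₁ b₁ Y₁} hl hh => IH (N - 1) (by omega) X₁ a₁ b₁ Y₁ (by omega) hh
  have kcancel : ∀ {x : ℕ} {u v : List ℕ}, u.length + 1 ≤ N → (x :: u) ∼ (x :: v) → u ∼ v := by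
    intro x u v hl hh
    obtain ⟨Z0, h1, h2⟩ := KEY hl hh
    simp only [comp_self, List.nil_append] at h1 h2
    exact h1.trans h2.symm
  intro X a b Y hX h
  suffices H : ∀ w, w ∼ (b :: Y) → ∀ c U, w = c :: U → U.length ≤ N →
      ∃ Z, U ∼ comp c b ++ Z ∧ Y ∼ comp b c ++ Z by
    exact H (a :: X) h a X rfl hX
  intro w hw
  induction hw using Relation.ReflTransGen.head_induction_on with
  | refl =>
    intro c U hEq hl
    cases hEq
    exact ⟨Y, by simpa using Beq.rfl, by simpa using Beq.rfl⟩
  | @head w w' hst hrest ihP =>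
    rintro c U rfl hUlen
    obtain ⟨p, q, x, y, hr, hwx, hw'⟩ := hst
    cases p with
    | cons e p' =>
      -- the rewrite happens inside the tail U
      simp only [List.cons_append] at hwx
      injection hwx with e1 e2
      subst e1; subst e2
      have hstep : Step (p' ++ x ++ q) (p' ++ y ++ q) := ⟨p', q, x, y, hr, rfl, rfl⟩
      have hlen : (p' ++ y ++ q).length ≤ N := by
        have := hstep.length; omega
      obtain ⟨Z, h1, h2⟩ := ihP c (p' ++ y ++ q) (by simpa using hw') hlen
      exact ⟨Z, hstep.beq.trans h1, h2⟩
    | nil =>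
      simp only [List.nil_append] at hwx hw'
      cases hr with
      | @comm c' d hcd =>
        simp only [List.cons_append, List.nil_append] at hwx hw'
        injection hwx with e1 e2
        subst e1; subst e2
        -- U = d :: q, w' = d :: c :: q, Far c d
        have hq2 : q.length + 1 ≤ N := by simpa using hUlen
        obtain ⟨Z₁, h1, h2⟩ := ihP d (c :: q) (by simpa using hw') (by simpa using hUlen)
        rcases trichotomy b d with hbd | hbd | hbd
        · -- b = d
          subst hbd
          simp only [comp_self, List.nil_append] at h1 h2
          exact ⟨q, by rw [comp_far hcd]; exact Beq.rfl,
            by rw [comp_far hcd.symm]; exact h2.trans h1.symm⟩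
        · -- Adj b d
          rw [comp_adj hbd.symm] at h1
          rw [comp_adj hbd] at h2
          simp only [List.cons_append, List.nil_append] at h1 h2
          have hZ₁ : Z₁.length + 1 = q.length := by
            have := h1.length; simp at this; omega
          rcases trichotomy b c with hbc | hbc | hbc
          · -- b = c : then Adj c d, contradicting Far c d
            exact absurd hcd (hbc ▸ hbd).not_far
          · -- F1-6 : Adj b c, Adj b d, Far c d
            obtain ⟨Z₂, g1, g2⟩ := KEY (by (try simp only [List.length_cons]); omega : _ ≤ N) h1
            rw [comp_adj hbc.symm] at g1
            rw [comp_adj hbc] at g2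
            simp only [List.cons_append, List.nil_append] at g1 g2
            have hZ₂ : Z₂.length + 2 = q.length := by
              have := g1.length; simp at this; omega
            obtain ⟨Z₃, f1, f2⟩ := KEY (by (try simp only [List.length_cons]); omega) g2
            rw [comp_far hcd.symm] at f1
            rw [comp_far hcd] at f2
            simp only [List.cons_append, List.nil_append] at f1 f2
            obtain ⟨Z₄, e1, e2⟩ := KEY (by (try simp only [List.length_cons]); omega) f2
            rw [comp_adj hbd] at e1
            rw [comp_adj hbd.symm] at e2
            simp only [List.cons_append, List.nil_append] at e1 e2
            refine ⟨d :: b :: c :: Z₄, ?_, ?_⟩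
            · rw [comp_adj hbc.symm]
              simp only [List.cons_append, List.nil_append]
              -- d::q ∼ [d,b,c,d,b]++Z₄ ∼ [b,c,d,b,c]++Z₄
              have c1 : d :: q ∼ d :: b :: c :: d :: b :: Z₄ :=
                Beq.cons d (g1.trans (Beq.cons b (Beq.cons c e1)))
              refine c1.trans ?_
              calc d :: b :: c :: d :: b :: Z₄
                  ∼ d :: b :: d :: c :: b :: Z₄ :=
                    Beq.cons d (Beq.cons b (swap_cons hcd (b :: Z₄)))
                _ ∼ b :: d :: b :: c :: b :: Z₄ := braid_cons hbd.symm (c :: b :: Z₄)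
                _ ∼ b :: d :: c :: b :: c :: Z₄ :=
                    Beq.cons b (Beq.cons d (braid_cons hbc Z₄))
                _ ∼ b :: c :: d :: b :: c :: Z₄ :=
                    Beq.cons b (swap_cons hcd.symm (b :: c :: Z₄))
            · rw [comp_adj hbc]
              simp only [List.cons_append, List.nil_append]
              have c1 : Y ∼ d :: b :: c :: b :: d :: Z₄ :=
                h2.trans (Beq.cons d (Beq.cons b (f1.trans (Beq.cons c e2))))
              refine c1.trans ?_
              calc d :: b :: c :: b :: d :: Z₄
                  ∼ d :: c :: b :: c :: d :: Z₄ := Beq.cons d (braid_cons hbc (d :: Z₄))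
                _ ∼ c :: d :: b :: c :: d :: Z₄ := swap_cons hcd.symm (b :: c :: d :: Z₄)
                _ ∼ c :: d :: b :: d :: c :: Z₄ :=
                    Beq.cons c (Beq.cons d (Beq.cons b (swap_cons hcd Z₄)))
                _ ∼ c :: b :: d :: b :: c :: Z₄ :=
                    Beq.cons c (braid_cons hbd.symm (c :: Z₄))
          · -- F1-5 : Far b c, Adj b d, Far c d
            obtain ⟨Z₂, g1, g2⟩ := KEY (by (try simp only [List.length_cons]); omega : _ ≤ N) h1
            rw [comp_far hbc.symm] at g1
            rw [comp_far hbc] at g2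
            simp only [List.cons_append, List.nil_append] at g1 g2
            obtain ⟨Z₃, f1, f2⟩ := KEY (by (try simp only [List.length_cons]); omega) g2
            rw [comp_far hcd.symm] at f1
            rw [comp_far hcd] at f2
            simp only [List.cons_append, List.nil_append] at f1 f2
            refine ⟨d :: b :: Z₃, ?_, ?_⟩
            · rw [comp_far hbc.symm]
              simp only [List.cons_append, List.nil_append]
              have c1 : d :: q ∼ d :: b :: d :: Z₃ :=
                Beq.cons d (g1.trans (Beq.cons b f2))
              exact c1.trans (braid_cons hbd.symm Z₃)
            · rw [comp_far hbc]
              simp only [List.cons_append, List.nil_append]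
              have c1 : Y ∼ d :: b :: c :: Z₃ :=
                h2.trans (Beq.cons d (Beq.cons b f1))
              refine c1.trans ?_
              calc d :: b :: c :: Z₃
                  ∼ d :: c :: b :: Z₃ := Beq.cons d (swap_cons hbc Z₃)
                _ ∼ c :: d :: b :: Z₃ := swap_cons hcd.symm (b :: Z₃)
        · -- Far b d
          rw [comp_far hbd.symm] at h1
          rw [comp_far hbd] at h2
          simp only [List.cons_append, List.nil_append] at h1 h2
          rcases trichotomy b c with hbc | hbc | hbc
          · -- b = c
            subst hbc
            have hq : q ∼ Z₁ := kcancel hq2 h1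
            refine ⟨d :: q, ?_, ?_⟩
            · simpa using Beq.rfl
            · simpa using h2.trans (Beq.cons d hq.symm)
          · -- F1-4 : Adj b c, Far b d, Far c d
            obtain ⟨Z₂, g1, g2⟩ := KEY (by (try simp only [List.length_cons]); omega : _ ≤ N) h1
            rw [comp_adj hbc.symm] at g1
            rw [comp_adj hbc] at g2
            simp only [List.cons_append, List.nil_append] at g1 g2
            refine ⟨d :: Z₂, ?_, ?_⟩
            · rw [comp_adj hbc.symm]
              simp only [List.cons_append, List.nil_append]
              have c1 : d :: q ∼ d :: b :: c :: Z₂ := Beq.cons d g1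
              refine c1.trans ?_
              calc d :: b :: c :: Z₂
                  ∼ b :: d :: c :: Z₂ := swap_cons hbd.symm (c :: Z₂)
                _ ∼ b :: c :: d :: Z₂ := Beq.cons b (swap_cons hcd.symm Z₂)
            · rw [comp_adj hbc]
              simp only [List.cons_append, List.nil_append]
              have c1 : Y ∼ d :: c :: b :: Z₂ := h2.trans (Beq.cons d g2)
              refine c1.trans ?_
              calc d :: c :: b :: Z₂
                  ∼ c :: d :: b :: Z₂ := swap_cons hcd.symm (b :: Z₂)
                _ ∼ c :: b :: d :: Z₂ := Beq.cons c (swap_cons hbd.symm Z₂)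
          · -- F1-3 : Far b c, Far b d, Far c d
            obtain ⟨Z₂, g1, g2⟩ := KEY (by (try simp only [List.length_cons]); omega : _ ≤ N) h1
            rw [comp_far hbc.symm] at g1
            rw [comp_far hbc] at g2
            simp only [List.cons_append, List.nil_append] at g1 g2
            refine ⟨d :: Z₂, ?_, ?_⟩
            · rw [comp_far hbc.symm]
              simp only [List.cons_append, List.nil_append]
              exact (Beq.cons d g1).trans (swap_cons hbd.symm (Z₂))
            · rw [comp_far hbc]
              simp only [List.cons_append, List.nil_append]
              exact (h2.trans (Beq.cons d g2)).trans (swap_cons hcd.symm Z₂)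
      | @braid c' d hcd =>
        simp only [List.cons_append, List.nil_append] at hwx hw'
        injection hwx with e1 e2
        subst e1; subst e2
        -- U = d :: c :: q, w' = d :: c :: d :: q, Adj c d
        have hq3 : q.length + 2 ≤ N := by simp at hUlen; omega
        obtain ⟨Z₁, h1, h2⟩ := ihP d (c :: d :: q) (by simpa using hw') (by simpa using hUlen)
        rcases trichotomy b d with hbd | hbd | hbd
        · -- b = d
          subst hbd
          simp only [comp_self, List.nil_append] at h1 h2
          exact ⟨q, by rw [comp_adj hcd]; exact Beq.rfl,
            by rw [comp_adj hcd.symm]; exact h2.trans h1.symm⟩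
        · -- Adj b d
          rw [comp_adj hbd.symm] at h1
          rw [comp_adj hbd] at h2
          simp only [List.cons_append, List.nil_append] at h1 h2
          have hZ₁ : Z₁.length = q.length := by
            have := h1.length; simp at this; omega
          rcases trichotomy b c with hbc | hbc | hbc
          · -- b = c
            subst hbc
            have hdq : d :: q ∼ d :: Z₁ :=
              kcancel (by (try simp only [List.length_cons]); omega) h1
            have hq : q ∼ Z₁ := kcancel (by omega) hdq
            refine ⟨d :: b :: q, by simpa using Beq.rfl, ?_⟩
            simp only [comp_self, List.nil_append]
            exact h2.trans (Beq.cons d (Beq.cons b hq.symm))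
          · -- Adj b c, Adj b d, Adj c d : impossible
            exact absurd hcd (fun hcd' => adj_adj_adj hbc hcd' hbd)
          · -- F2-6 : Far b c, Adj b d, Adj c d
            obtain ⟨Z₂, g1, g2⟩ := KEY (by (try simp only [List.length_cons]); omega : _ ≤ N) h1
            rw [comp_far hbc.symm] at g1
            rw [comp_far hbc] at g2
            simp only [List.cons_append, List.nil_append] at g1 g2
            obtain ⟨Z₃, f1, f2⟩ := KEY (by (try simp only [List.length_cons]); omega) g1
            rw [comp_adj hbd.symm] at f1
            rw [comp_adj hbd] at f2
            simp only [List.cons_append, List.nil_append] at f1 f2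
            obtain ⟨Z₄, e1, e2⟩ := KEY (by (try simp only [List.length_cons]); omega) g2
            rw [comp_adj hcd.symm] at e1
            rw [comp_adj hcd] at e2
            simp only [List.cons_append, List.nil_append] at e1 e2
            have hZ₃ : Z₃.length + 2 = q.length := by
              have := f1.length; simp at this; omega
            have hbc' : b :: Z₃ ∼ c :: Z₄ := kcancel (by (try simp only [List.length_cons]); omega) (f2.symm.trans e2)
            obtain ⟨Z₅, w1, w2⟩ := KEY (by (try simp only [List.length_cons]); omega) hbc'
            rw [comp_far hbc] at w1
            rw [comp_far hbc.symm] at w2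
            simp only [List.cons_append, List.nil_append] at w1 w2
            refine ⟨d :: b :: c :: d :: Z₅, ?_, ?_⟩
            · rw [comp_far hbc.symm]
              simp only [List.cons_append, List.nil_append]
              have c1 : d :: c :: q ∼ d :: c :: b :: d :: c :: Z₅ :=
                Beq.cons d (Beq.cons c (f1.trans (Beq.cons b (Beq.cons d w1))))
              refine c1.trans ?_
              calc d :: c :: b :: d :: c :: Z₅
                  ∼ d :: b :: c :: d :: c :: Z₅ :=
                    Beq.cons d (swap_cons hbc.symm (d :: c :: Z₅))
                _ ∼ d :: b :: d :: c :: d :: Z₅ :=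
                    Beq.cons d (Beq.cons b (braid_cons hcd Z₅))
                _ ∼ b :: d :: b :: c :: d :: Z₅ := braid_cons hbd.symm (c :: d :: Z₅)
            · rw [comp_far hbc]
              simp only [List.cons_append, List.nil_append]
              have c1 : Y ∼ d :: b :: c :: d :: b :: Z₅ :=
                h2.trans (Beq.cons d (Beq.cons b (e1.trans
                  (Beq.cons c (Beq.cons d w2)))))
              refine c1.trans ?_
              calc d :: b :: c :: d :: b :: Z₅
                  ∼ d :: c :: b :: d :: b :: Z₅ :=
                    Beq.cons d (swap_cons hbc (d :: b :: Z₅))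
                _ ∼ d :: c :: d :: b :: d :: Z₅ :=
                    Beq.cons d (Beq.cons c (braid_cons hbd Z₅))
                _ ∼ c :: d :: c :: b :: d :: Z₅ := braid_cons hcd.symm (b :: d :: Z₅)
                _ ∼ c :: d :: b :: c :: d :: Z₅ :=
                    Beq.cons c (Beq.cons d (swap_cons hbc.symm (d :: Z₅)))
        · -- Far b d
          rw [comp_far hbd.symm] at h1
          rw [comp_far hbd] at h2
          simp only [List.cons_append, List.nil_append] at h1 h2
          have hZ₁ : Z₁.length = q.length + 1 := by
            have := h1.length; simp at this; omega
          rcases trichotomy b c with hbc | hbc | hbc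
          · -- b = c : then Far c d, contradicting Adj c d
            exact absurd (hbc ▸ hbd) hcd.not_far
          · -- F2-5 : Adj b c, Far b d, Adj c d
            obtain ⟨Z₂, g1, g2⟩ := KEY (by (try simp only [List.length_cons]); omega : _ ≤ N) h1
            rw [comp_adj hbc.symm] at g1
            rw [comp_adj hbc] at g2
            simp only [List.cons_append, List.nil_append] at g1 g2
            have hZ₂ : Z₂.length + 1 = q.length := by
              have := g1.length; simp at this; omega
            obtain ⟨Z₃, f1, f2⟩ := KEY (by (try simp only [List.length_cons]); omega) g1
            rw [comp_far hbd.symm] at f1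
            rw [comp_far hbd] at f2
            simp only [List.cons_append, List.nil_append] at f1 f2
            obtain ⟨Z₄, e1, e2⟩ := KEY (by (try simp only [List.length_cons]); omega) f2
            rw [comp_adj hcd] at e1
            rw [comp_adj hcd.symm] at e2
            simp only [List.cons_append, List.nil_append] at e1 e2
            refine ⟨d :: c :: b :: Z₄, ?_, ?_⟩
            · rw [comp_adj hbc.symm]
              simp only [List.cons_append, List.nil_append]
              have c1 : d :: c :: q ∼ d :: c :: b :: c :: d :: Z₄ :=
                Beq.cons d (Beq.cons c (f1.trans (Beq.cons b e2)))
              refine c1.trans ?_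
              calc d :: c :: b :: c :: d :: Z₄
                  ∼ d :: b :: c :: b :: d :: Z₄ :=
                    Beq.cons d (braid_cons hbc.symm (d :: Z₄))
                _ ∼ b :: d :: c :: b :: d :: Z₄ := swap_cons hbd.symm (c :: b :: d :: Z₄)
                _ ∼ b :: d :: c :: d :: b :: Z₄ :=
                    Beq.cons b (Beq.cons d (Beq.cons c (swap_cons hbd Z₄)))
                _ ∼ b :: c :: d :: c :: b :: Z₄ :=
                    Beq.cons b (braid_cons hcd.symm (b :: Z₄))
            · rw [comp_adj hbc]
              simp only [List.cons_append, List.nil_append]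
              have c1 : Y ∼ d :: c :: b :: d :: c :: Z₄ :=
                h2.trans (Beq.cons d (g2.trans (Beq.cons c (Beq.cons b e1))))
              refine c1.trans ?_
              calc d :: c :: b :: d :: c :: Z₄
                  ∼ d :: c :: d :: b :: c :: Z₄ :=
                    Beq.cons d (Beq.cons c (swap_cons hbd (c :: Z₄)))
                _ ∼ c :: d :: c :: b :: c :: Z₄ := braid_cons hcd.symm (b :: c :: Z₄)
                _ ∼ c :: d :: b :: c :: b :: Z₄ :=
                    Beq.cons c (Beq.cons d (braid_cons hbc.symm Z₄))
                _ ∼ c :: b :: d :: c :: b :: Z₄ :=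
                    Beq.cons c (swap_cons hbd.symm (c :: b :: Z₄))
          · -- F2-4 : Far b c, Far b d, Adj c d
            obtain ⟨Z₂, g1, g2⟩ := KEY (by (try simp only [List.length_cons]); omega : _ ≤ N) h1
            rw [comp_far hbc.symm] at g1
            rw [comp_far hbc] at g2
            simp only [List.cons_append, List.nil_append] at g1 g2
            have hZ₂ : Z₂.length = q.length := by
              have := g1.length; simp at this; omega
            obtain ⟨Z₃, f1, f2⟩ := KEY (by (try simp only [List.length_cons]); omega) g1
            rw [comp_far hbd.symm] at f1
            rw [comp_far hbd] at f2
            simp only [List.cons_append, List.nil_append] at f1 f2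
            refine ⟨d :: c :: Z₃, ?_, ?_⟩
            · rw [comp_far hbc.symm]
              simp only [List.cons_append, List.nil_append]
              have c1 : d :: c :: q ∼ d :: c :: b :: Z₃ :=
                Beq.cons d (Beq.cons c f1)
              refine c1.trans ?_
              calc d :: c :: b :: Z₃
                  ∼ d :: b :: c :: Z₃ := Beq.cons d (swap_cons hbc.symm Z₃)
                _ ∼ b :: d :: c :: Z₃ := swap_cons hbd.symm (c :: Z₃)
            · rw [comp_far hbc]
              simp only [List.cons_append, List.nil_append]
              have c1 : Y ∼ d :: c :: d :: Z₃ :=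
                h2.trans (Beq.cons d (g2.trans (Beq.cons c f2)))
              exact c1.trans (braid_cons hcd.symm Z₃)

end Braid

namespace Braid

lemma key' {X : List ℕ} {a b : ℕ} {Y : List ℕ} (h : (a :: X) ∼ (b :: Y)) :
    ∃ Z, X ∼ comp a b ++ Z ∧ Y ∼ comp b a ++ Z :=
  key X.length X a b Y le_rfl h

lemma cancel_cons {x : ℕ} {u v : List ℕ} (h : (x :: u) ∼ (x :: v)) : u ∼ v := by
  obtain ⟨Z, h1, h2⟩ := key' h
  simp only [comp_self, List.nil_append] at h1 h2
  exact h1.trans h2.symm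

lemma cancel_left {u v : List ℕ} (w : List ℕ) (h : w ++ u ∼ w ++ v) : u ∼ v := by
  induction w with
  | nil => simpa using h
  | cons a w ih => exact ih (cancel_cons (by simpa using h))

lemma cancel_right {u v : List ℕ} (w : List ℕ) (h : u ++ w ∼ v ++ w) : u ∼ v := by
  have := cancel_left w.reverse (by simpa using h.rev)
  simpa using this.rev

lemma replicate_rigid {i : ℕ} {m : ℕ} {w : List ℕ}
    (h : (List.replicate m i) ∼ w) : w = List.replicate m i := by
  induction h with
  | refl => rfl
  | tail hc hstep ih =>
    exfalso
    subst ih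
    obtain ⟨p, q, x, y, hr, hu, _⟩ := hstep
    have hmem : ∀ c ∈ x, c = i := by
      intro c hc
      have : c ∈ List.replicate m i := hu ▸ (by simp [hc])
      exact (List.eq_of_mem_replicate this)
    cases hr with
    | @comm a b hab =>
      have ha := hmem a (by simp); have hb := hmem b (by simp)
      subst ha; subst hb
      rcases hab with h'|h' <;> omega
    | @braid a b hab =>
      have ha := hmem a (by simp); have hb := hmem b (by simp)
      subst ha; subst hb
      rcases hab with h'|h' <;> omega

lemma rep_shift (m : ℕ) (j : ℕ) (l : List ℕ) :
    List.replicate m j ++ j :: l = j :: (List.replicate m j ++ l) := by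
  induction m with
  | zero => rfl
  | succ m ih => simp only [List.replicate_succ, List.cons_append, ih]

lemma peel_far : ∀ (k : ℕ) (V Z : List ℕ) (a j : ℕ), Far a j →
    (List.replicate k j ++ V) ∼ (a :: Z) →
    ∃ Z', V ∼ a :: Z' ∧ Z ∼ List.replicate k j ++ Z' := by
  intro k
  induction k with
  | zero => intro V Z a j _ h; exact ⟨Z, by simpa using h, by simpa using Beq.rfl⟩
  | succ k ih =>
    intro V Z a j hfar h
    rw [List.replicate_succ, List.cons_append] at h
    obtain ⟨T, h1, h2⟩ := key' h
    rw [comp_far hfar.symm] at h1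
    rw [comp_far hfar] at h2
    simp only [List.cons_append, List.nil_append] at h1 h2
    obtain ⟨Z', g1, g2⟩ := ih V T a j hfar h1
    refine ⟨Z', g1, ?_⟩
    rw [List.replicate_succ, List.cons_append]
    exact h2.trans (Beq.cons j g2)

lemma peel_adj : ∀ (k : ℕ) (V Z : List ℕ) (a j : ℕ), Adj a j →
    (List.replicate k j ++ V) ∼ (a :: j :: Z) →
    ∃ Z', V ∼ a :: j :: Z' ∧ Z ∼ List.replicate k a ++ Z' := by
  intro k
  induction k with
  | zero => intro V Z a j _ h; exact ⟨Z, by simpa using h, by simpa using Beq.rfl⟩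
  | succ k ih =>
    intro V Z a j hadj h
    rw [List.replicate_succ, List.cons_append] at h
    obtain ⟨T, h1, h2⟩ := key' h
    rw [comp_adj hadj.symm] at h1
    rw [comp_adj hadj] at h2
    simp only [List.cons_append, List.nil_append] at h1 h2
    have hZ : Z ∼ a :: T := cancel_cons h2
    obtain ⟨Z', g1, g2⟩ := ih V T a j hadj h1
    refine ⟨Z', g1, ?_⟩
    rw [List.replicate_succ, List.cons_append]
    exact hZ.trans (Beq.cons a g2)

/-- The main monoid-level theorem: if `W i^m ∼ j^m W` then `W i ∼ j W`. -/
lemma main : ∀ (N : ℕ) (W : List ℕ) (i j m : ℕ), 1 ≤ m → W.length ≤ N →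
    (W ++ List.replicate m i) ∼ (List.replicate m j ++ W) → (W ++ [i]) ∼ (j :: W) := by
  intro N
  induction N using Nat.strong_induction_on with
  | _ N IH =>
  intro W i j m hm hWl h
  match W with
  | [] =>
    simp only [List.nil_append, List.append_nil] at h ⊢
    have := replicate_rigid h
    obtain ⟨m', rfl⟩ : ∃ m', m = m' + 1 := ⟨m - 1, by omega⟩
    have hij : i = j := by
      rw [List.replicate_succ, List.replicate_succ] at this
      injection this with h1 _
      exact h1.symm
    subst hij
    exact Beq.rfl
  | a :: W₀ =>
    have hW₀ : W₀.length + 1 ≤ N := by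
      simpa using hWl
    by_cases haj : a = j
    · -- leading letter is j
      subst haj
      rw [List.cons_append, rep_shift] at h
      have h' := cancel_cons h
      have := IH (N - 1) (by omega) W₀ i a m hm (by omega) h'
      calc (a :: W₀) ++ [i] = a :: (W₀ ++ [i]) := by simp
        _ ∼ a :: a :: W₀ := Beq.cons a this
    · obtain ⟨m', rfl⟩ : ∃ m', m = m' + 1 := ⟨m - 1, by omega⟩
      simp only [List.replicate_succ, List.cons_append] at h
      obtain ⟨Z, h1, h2⟩ := key' h
      rcases trichotomy a j with h' | hadj | hfar
      · exact absurd h' haj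
      · -- Adj a j
        rw [comp_adj hadj] at h1
        rw [comp_adj hadj.symm] at h2
        simp only [List.cons_append, List.nil_append] at h1 h2
        obtain ⟨Z', g1, g2⟩ := peel_adj m' (a :: W₀) Z a j hadj h2
        have gW₀ : W₀ ∼ j :: Z' := cancel_cons g1
        have e1 : (W₀ ++ i :: List.replicate m' i) ∼
            j :: (a :: (List.replicate m' a ++ Z')) :=
          h1.trans (Beq.cons j (Beq.cons a g2))
        have e2 : (W₀ ++ i :: List.replicate m' i) ∼
            j :: (Z' ++ i :: List.replicate m' i) := by
          have := gW₀.append_right (i :: List.replicate m' i)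
          simpa using this
        have e3 : (Z' ++ List.replicate (m' + 1) i) ∼
            (List.replicate (m' + 1) a ++ Z') := by
          have := cancel_cons (e2.symm.trans e1)
          simpa [List.replicate_succ] using this
        have hZ'l : Z'.length + 2 ≤ N := by
          have := gW₀.length; simp at this; omega
        have main' := IH (N - 1) (by omega) Z' i a (m' + 1) (by omega) (by omega) e3
        -- assemble
        have w1 : (W₀ ++ [i]) ∼ j :: a :: Z' := by
          refine ((gW₀.append_right [i]).trans ?_)
          simp only [List.cons_append]
          exact Beq.cons j main'
        calc (a :: W₀) ++ [i] = a :: (W₀ ++ [i]) := by simp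
          _ ∼ a :: j :: a :: Z' := Beq.cons a w1
          _ ∼ j :: a :: j :: Z' := braid_cons hadj Z'
          _ ∼ j :: a :: W₀ := Beq.cons j (Beq.cons a gW₀.symm)
      · -- Far a j
        rw [comp_far hfar] at h1
        rw [comp_far hfar.symm] at h2
        simp only [List.cons_append, List.nil_append] at h1 h2
        obtain ⟨Z', g1, g2⟩ := peel_far m' (a :: W₀) Z a j hfar h2
        have gW₀ : W₀ ∼ Z' := cancel_cons g1
        have e1 : (W₀ ++ List.replicate (m' + 1) i) ∼
            (List.replicate (m' + 1) j ++ W₀) := by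
          have := h1.trans (Beq.cons j (g2.trans ((gW₀.symm).append_left (List.replicate m' j))))
          simpa [List.replicate_succ] using this
        have main' := IH (N - 1) (by omega) W₀ i j (m' + 1) (by omega) (by omega) e1
        calc (a :: W₀) ++ [i] = a :: (W₀ ++ [i]) := by simp
          _ ∼ a :: j :: W₀ := Beq.cons a main'
          _ ∼ j :: a :: W₀ := swap_cons hfar W₀
end Braid

namespace Braid

/-- The ascending run `[0, 1, ..., k]`. -/
def asc (k : ℕ) : List ℕ := List.range (k + 1)

/-- The descending run `[k, ..., 1, 0]`. -/
def desc (k : ℕ) : List ℕ := (asc k).reverse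

/-- Garside's fundamental word `Δ_m`. -/
def delta : ℕ → List ℕ
  | 0 => []
  | k + 1 => asc k ++ delta k

lemma asc_succ (k : ℕ) : asc (k + 1) = asc k ++ [k + 1] := by simp [asc, List.range_succ]

lemma asc_mem {k x : ℕ} (h : x ∈ asc k) : x ≤ k := by
  have := List.mem_range.mp h; omega

lemma delta_mem : ∀ {m x : ℕ}, x ∈ delta m → x < m := by
  intro m
  induction m with
  | zero => intro x h; simp [delta] at h
  | succ m ih =>
    intro x h
    rcases List.mem_append.mp h with h | h
    · have := asc_mem h; omega
    · have := ih h; omega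

lemma far_word_comm {c : ℕ} : ∀ {w : List ℕ}, (∀ x ∈ w, Far x c) →
    (w ++ [c]) ∼ (c :: w) := by
  intro w
  induction w with
  | nil => intro _; exact Beq.rfl
  | cons a w ih =>
    intro h
    have h1 : a :: (w ++ [c]) ∼ a :: c :: w := Beq.cons a (ih (fun x hx => h x (by simp [hx])))
    exact h1.trans (swap_cons (h a (by simp)) w)

lemma ascA : ∀ (k a : ℕ), a < k → (asc k ++ [a]) ∼ ((a + 1) :: asc k) := by
  intro k
  induction k with
  | zero => intro a h; omega
  | succ k ih =>
    intro a h
    rcases Nat.lt_or_ge a k with h' | h'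
    · -- a < k
      calc asc (k + 1) ++ [a] = asc k ++ ([k + 1] ++ [a]) := by simp [asc_succ]
        _ ∼ asc k ++ ([a] ++ [k + 1]) := by
            refine Beq.append_left _ ?_
            exact swap_cons (Or.inr (by omega)) []
        _ = (asc k ++ [a]) ++ [k + 1] := by simp
        _ ∼ ((a + 1) :: asc k) ++ [k + 1] := (ih a h').append_right _
        _ = (a + 1) :: asc (k + 1) := by simp [asc_succ]
    · -- a = k
      have ha : a = k := by omega
      rw [ha]
      cases k with
      | zero =>
        -- asc 1 ++ [0] = [0,1,0] ∼ [1,0,1]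
        exact braid_cons (Or.inl rfl) []
      | succ k' =>
        -- asc (k'+2) ++ [k'+1] = asc k' ++ [k'+1, k'+2, k'+1]
        calc asc (k' + 2) ++ [k' + 1]
            = asc k' ++ ([k' + 1, k' + 2, k' + 1] ++ []) := by
              simp [asc_succ]
          _ ∼ asc k' ++ ([k' + 2, k' + 1, k' + 2] ++ []) := by
              refine Beq.append_left _ ?_
              exact braid_cons (Or.inl rfl) []
          _ = (asc k' ++ [k' + 2]) ++ [k' + 1, k' + 2] := by simp
          _ ∼ ((k' + 2) :: asc k') ++ [k' + 1, k' + 2] := by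
              refine Beq.append_right _ ?_
              refine far_word_comm ?_
              intro x hx
              have := asc_mem hx
              exact Or.inl (by omega)
          _ = (k' + 2) :: asc (k' + 2) := by simp [asc_succ]

lemma descA (k a : ℕ) (h : a < k) : (a :: desc k) ∼ (desc k ++ [a + 1]) := by
  have := (ascA k a h).rev
  simpa [desc] using this

lemma deltaF : ∀ m : ℕ, (asc m ++ delta m) ∼ (delta m ++ desc m) := by
  intro m
  induction m with
  | zero => exact Beq.rfl
  | succ m ih =>
    have hfar : ∀ x ∈ delta m, Far x (m + 1) := by
      intro x hx
      have := delta_mem hx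
      exact Or.inl (by omega)
    calc asc (m + 1) ++ delta (m + 1)
        = (asc m ++ [m + 1]) ++ (asc m ++ delta m) := by rw [asc_succ]; rfl
      _ ∼ (asc m ++ [m + 1]) ++ (delta m ++ desc m) := Beq.append_left _ ih
      _ = asc m ++ (([m + 1] ++ delta m) ++ desc m) := by simp
      _ ∼ asc m ++ ((delta m ++ [m + 1]) ++ desc m) := by
          refine Beq.append_left _ (Beq.append_right _ ?_)
          exact (far_word_comm hfar).symm
      _ = delta (m + 1) ++ ((m + 1) :: desc m) := by simp [delta]
      _ = delta (m + 1) ++ desc (m + 1) := by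
          simp [desc, asc_succ]

lemma delta_rev : ∀ m : ℕ, (delta m).reverse ∼ delta m := by
  intro m
  induction m with
  | zero => exact Beq.rfl
  | succ m ih =>
    calc (delta (m + 1)).reverse = (delta m).reverse ++ desc m := by
          simp [delta, desc]
      _ ∼ delta m ++ desc m := ih.append_right _
      _ ∼ asc m ++ delta m := (deltaF m).symm
      _ = delta (m + 1) := rfl

lemma deltaC : ∀ (m a : ℕ), a < m → (delta m ++ [a]) ∼ ((m - 1 - a) :: delta m) := by
  intro m
  induction m with
  | zero => intro a h; omega
  | succ m ih =>
    intro a h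
    rcases Nat.lt_or_ge a m with h' | h'
    · calc delta (m + 1) ++ [a] = asc m ++ (delta m ++ [a]) := by simp [delta]
        _ ∼ asc m ++ ((m - 1 - a) :: delta m) := Beq.append_left _ (ih a h')
        _ = (asc m ++ [m - 1 - a]) ++ delta m := by simp
        _ ∼ ((m - 1 - a + 1) :: asc m) ++ delta m := (ascA m _ (by omega)).append_right _
        _ = (m + 1 - 1 - a) :: delta (m + 1) := by
            have : m - 1 - a + 1 = m + 1 - 1 - a := by omega
            rw [this]; rfl
    · have ha : a = m := by omega
      rw [ha]
      cases m with
      | zero => exact Beq.rfl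
      | succ m' =>
        calc delta (m' + 2) ++ [m' + 1]
            ∼ (delta (m' + 1) ++ desc (m' + 1)) ++ [m' + 1] :=
              (deltaF (m' + 1)).append_right _
          _ = delta (m' + 1) ++ (desc (m' + 1) ++ [m' + 1]) := by simp
          _ ∼ delta (m' + 1) ++ (m' :: desc (m' + 1)) :=
              Beq.append_left _ (descA (m' + 1) m' (by omega)).symm
          _ = (delta (m' + 1) ++ [m']) ++ desc (m' + 1) := by simp
          _ ∼ ((m' + 1 - 1 - m') :: delta (m' + 1)) ++ desc (m' + 1) :=
              (ih m' (by omega)).append_right _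
          _ = 0 :: (delta (m' + 1) ++ desc (m' + 1)) := by
              have : m' + 1 - 1 - m' = 0 := by omega
              rw [this]; rfl
          _ ∼ 0 :: (asc (m' + 1) ++ delta (m' + 1)) :=
              Beq.cons 0 (deltaF (m' + 1)).symm
          _ = (m' + 2 - 1 - (m' + 1)) :: delta (m' + 2) := by
              have : m' + 2 - 1 - (m' + 1) = 0 := by omega
              rw [this]; rfl

lemma delta_head : ∀ (m a : ℕ), a < m →
    ∃ w, (∀ x ∈ w, x < m) ∧ delta m ∼ a :: w := by
  intro m
  induction m with
  | zero => intro a h; omega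
  | succ m ih =>
    intro a h
    cases a with
    | zero =>
      refine ⟨(List.range m).map Nat.succ ++ delta m, ?_, ?_⟩
      · intro x hx
        rcases List.mem_append.mp hx with hx | hx
        · obtain ⟨y, hy, rfl⟩ := List.mem_map.mp hx
          have := List.mem_range.mp hy; omega
        · have := delta_mem hx; omega
      · have : asc m = 0 :: (List.range m).map Nat.succ := by
          simpa [asc] using List.range_succ_eq_map (n := m)
        show (asc m ++ delta m) ∼ _
        rw [this]
        exact Beq.rfl
    | succ b =>
      obtain ⟨w₀, hb, hw₀⟩ := ih b (by omega)
      refine ⟨asc m ++ w₀, ?_, ?_⟩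
      · intro x hx
        rcases List.mem_append.mp hx with hx | hx
        · have := asc_mem hx; omega
        · have := hb x hx; omega
      · calc delta (m + 1) = asc m ++ delta m := rfl
          _ ∼ asc m ++ (b :: w₀) := Beq.append_left _ hw₀
          _ = (asc m ++ [b]) ++ w₀ := by simp
          _ ∼ ((b + 1) :: asc m) ++ w₀ := (ascA m b (by omega)).append_right _
          _ = (b + 1) :: (asc m ++ w₀) := rfl

lemma delta_tail (m a : ℕ) (h : a < m) :
    ∃ v, (∀ x ∈ v, x < m) ∧ delta m ∼ v ++ [a] := by
  obtain ⟨w, hb, hw⟩ := delta_head m a h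
  refine ⟨w.reverse, by simpa using hb, ?_⟩
  have := hw.rev
  exact ((delta_rev m).symm.trans this).trans (by simp [Beq.rfl])

/-- conjugating a word across `Δ_m`. -/
lemma delta_conj (m : ℕ) : ∀ (w : List ℕ), (∀ x ∈ w, x < m) →
    (delta m ++ w) ∼ (w.map (fun x => m - 1 - x) ++ delta m) := by
  intro w
  induction w with
  | nil => simpa using Beq.rfl
  | cons a w ih =>
    intro hb
    calc delta m ++ (a :: w) = (delta m ++ [a]) ++ w := by simp
      _ ∼ ((m - 1 - a) :: delta m) ++ w := (deltaC m a (hb a (by simp))).append_right _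
      _ = (m - 1 - a) :: (delta m ++ w) := rfl
      _ ∼ (m - 1 - a) :: (w.map (fun x => m - 1 - x) ++ delta m) :=
          Beq.cons _ (ih (fun x hx => hb x (by simp [hx])))
      _ = ((a :: w).map (fun x => m - 1 - x)) ++ delta m := rfl

/-- `k`-th power of `Δ_m`. -/
def deltaPow (m : ℕ) : ℕ → List ℕ
  | 0 => []
  | k + 1 => delta m ++ deltaPow m k

lemma deltaPow_mem : ∀ {m k x : ℕ}, x ∈ deltaPow m k → x < m := by
  intro m k
  induction k with
  | zero => intro x h; simp [deltaPow] at h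
  | succ k ih =>
    intro x h
    rcases List.mem_append.mp h with h | h
    · exact delta_mem h
    · exact ih h

lemma deltaPow_add (m a b : ℕ) : deltaPow m (a + b) = deltaPow m a ++ deltaPow m b := by
  induction a with
  | zero => simp [deltaPow]
  | succ a ih =>
    have h1 : a + 1 + b = (a + b) + 1 := by omega
    rw [h1]
    show delta m ++ deltaPow m (a + b) = _
    rw [ih]
    simp [deltaPow]

lemma left_mult_delta (m : ℕ) : ∀ (u : List ℕ), (∀ x ∈ u, x < m) →
    ∃ w, (∀ x ∈ w, x < m) ∧ (w ++ u) ∼ deltaPow m u.length := by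
  intro u
  induction u with
  | nil => exact fun _ => ⟨[], by simp, Beq.rfl⟩
  | cons a u₀ ih =>
    intro hb
    obtain ⟨w₀, hwb, hw₀⟩ := ih (fun x hx => hb x (by simp [hx]))
    have ham : a < m := hb a (by simp)
    obtain ⟨v, hvb, hv⟩ := delta_tail m a ham
    refine ⟨w₀.map (fun x => m - 1 - x) ++ v, ?_, ?_⟩
    · intro x hx
      rcases List.mem_append.mp hx with hx | hx
      · obtain ⟨y, _, rfl⟩ := List.mem_map.mp hx
        omega
      · exact hvb x hx
    · refine Beq.symm ?_
      show deltaPow m (u₀.length + 1) ∼ _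
      calc deltaPow m (u₀.length + 1) = delta m ++ deltaPow m u₀.length := by
            rw [show u₀.length + 1 = 1 + u₀.length by omega, deltaPow_add]
            simp [deltaPow]
        _ ∼ delta m ++ (w₀ ++ u₀) := Beq.append_left _ hw₀.symm
        _ = (delta m ++ w₀) ++ u₀ := by simp
        _ ∼ (w₀.map (fun x => m - 1 - x) ++ delta m) ++ u₀ :=
            (delta_conj m w₀ hwb).append_right _
        _ ∼ (w₀.map (fun x => m - 1 - x) ++ (v ++ [a])) ++ u₀ :=
            (Beq.append_left _ hv).append_right _
        _ = (w₀.map (fun x => m - 1 - x) ++ v) ++ (a :: u₀) := by simp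

lemma common_left_mult (m : ℕ) (u v : List ℕ) (hu : ∀ x ∈ u, x < m)
    (hv : ∀ x ∈ v, x < m) :
    ∃ w₁ w₂, (∀ x ∈ w₁, x < m) ∧ (∀ x ∈ w₂, x < m) ∧ (w₁ ++ u) ∼ (w₂ ++ v) := by
  obtain ⟨w₁, hb₁, h₁⟩ := left_mult_delta m u hu
  obtain ⟨w₂, hb₂, h₂⟩ := left_mult_delta m v hv
  refine ⟨deltaPow m v.length ++ w₁, deltaPow m u.length ++ w₂, ?_, ?_, ?_⟩
  · intro x hx
    rcases List.mem_append.mp hx with hx | hx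
    · exact deltaPow_mem hx
    · exact hb₁ x hx
  · intro x hx
    rcases List.mem_append.mp hx with hx | hx
    · exact deltaPow_mem hx
    · exact hb₂ x hx
  · calc (deltaPow m v.length ++ w₁) ++ u = deltaPow m v.length ++ (w₁ ++ u) := by simp
      _ ∼ deltaPow m v.length ++ deltaPow m u.length := Beq.append_left _ h₁
      _ = deltaPow m (v.length + u.length) := (deltaPow_add m _ _).symm
      _ = deltaPow m (u.length + v.length) := by rw [Nat.add_comm]
      _ = deltaPow m u.length ++ deltaPow m v.length := deltaPow_add m _ _
      _ ∼ deltaPow m u.length ++ (w₂ ++ v) := Beq.append_left _ h₂.symm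
      _ = (deltaPow m u.length ++ w₂) ++ v := by simp

end Braid

namespace Braid

/-! ### The positive braid monoid on `Fin m`, as a quotient of words -/

def wval {m : ℕ} (l : List (Fin m)) : List ℕ := l.map Fin.val

lemma wval_bound {m : ℕ} (l : List (Fin m)) : ∀ x ∈ wval l, x < m := by
  intro x hx
  obtain ⟨y, _, rfl⟩ := List.mem_map.mp hx
  exact y.isLt

lemma wval_append {m : ℕ} (u v : List (Fin m)) : wval (u ++ v) = wval u ++ wval v :=
  List.map_append

instance pbSetoid (m : ℕ) : Setoid (List (Fin m)) where
  r u v := wval u ∼ wval v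
  iseqv := ⟨fun _ => Beq.rfl, Beq.symm, Beq.trans⟩

/-- The positive braid monoid on `m` strands. -/
def PB (m : ℕ) := Quotient (pbSetoid m)

def pbmk {m : ℕ} (u : List (Fin m)) : PB m := Quotient.mk (pbSetoid m) u

instance (m : ℕ) : Monoid (PB m) where
  mul := Quotient.map₂ (· ++ ·) (by
    intro u₁ u₂ h₁ v₁ v₂ h₂
    show wval _ ∼ wval _
    rw [wval_append, wval_append]
    exact Beq.append h₁ h₂)
  one := pbmk []
  mul_assoc a b c := by
    obtain ⟨u⟩ := a; obtain ⟨v⟩ := b; obtain ⟨w⟩ := c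
    apply Quotient.sound
    show wval (u ++ v ++ w) ∼ wval (u ++ (v ++ w))
    rw [List.append_assoc]
    exact Beq.rfl
  one_mul a := by
    obtain ⟨u⟩ := a
    apply Quotient.sound
    show wval ([] ++ u) ∼ wval u
    exact Beq.rfl
  mul_one a := by
    obtain ⟨u⟩ := a
    apply Quotient.sound
    show wval (u ++ []) ∼ wval u
    rw [List.append_nil]
    exact Beq.rfl

lemma pbmk_mul {m : ℕ} (u v : List (Fin m)) : (pbmk u * pbmk v : PB m) = pbmk (u ++ v) := rfl

lemma pb_left_cancel {m : ℕ} {a b c : PB m} (h : a * b = a * c) : b = c := by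
  obtain ⟨u⟩ := a; obtain ⟨v⟩ := b; obtain ⟨w⟩ := c
  have := Quotient.exact h
  apply Quotient.sound
  have h' : (wval u ++ wval v) ∼ (wval u ++ wval w) := by
    rw [← wval_append, ← wval_append]; exact this
  exact cancel_left _ h'

lemma pb_right_cancel {m : ℕ} {a b c : PB m} (h : b * a = c * a) : b = c := by
  obtain ⟨u⟩ := a; obtain ⟨v⟩ := b; obtain ⟨w⟩ := c
  have := Quotient.exact h
  apply Quotient.sound
  have h' : (wval v ++ wval u) ∼ (wval w ++ wval u) := by
    rw [← wval_append, ← wval_append]; exact this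
  exact cancel_right _ h'

/-- lift a bounded word of naturals to a word over `Fin m`. -/
def liftw {m : ℕ} (w : List ℕ) (h : ∀ x ∈ w, x < m) : List (Fin m) :=
  w.attach.map (fun x => (⟨x.1, h x.1 x.2⟩ : Fin m))

lemma wval_liftw {m : ℕ} (w : List ℕ) (h : ∀ x ∈ w, x < m) : wval (liftw w h) = w := by
  simp [wval, liftw, List.map_map, Function.comp]

lemma pb_ore {m : ℕ} (r s : PB m) : ∃ r' s' : PB m, s' * r = r' * s := by
  obtain ⟨u⟩ := r; obtain ⟨v⟩ := s
  obtain ⟨w₁, w₂, hb₁, hb₂, hw⟩ :=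
    common_left_mult m (wval u) (wval v) (wval_bound u) (wval_bound v)
  refine ⟨pbmk (liftw w₂ hb₂), pbmk (liftw w₁ hb₁), ?_⟩
  apply Quotient.sound
  show wval _ ∼ wval _
  rw [wval_append, wval_append, wval_liftw, wval_liftw]
  exact hw

noncomputable instance pbOreSet (m : ℕ) : OreLocalization.OreSet (⊤ : Submonoid (PB m)) where
  ore_right_cancel r₁ r₂ s h := ⟨1, by simpa using pb_right_cancel h⟩
  oreNum r s := (pb_ore r (s : PB m)).choose
  oreDenom r s := ⟨(pb_ore r (s : PB m)).choose_spec.choose, trivial⟩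
  ore_eq r s := (pb_ore r (s : PB m)).choose_spec.choose_spec

/-- The group of fractions of the positive braid monoid. -/
abbrev BG (m : ℕ) := OreLocalization (⊤ : Submonoid (PB m)) (PB m)

noncomputable def pbInv {m : ℕ} : BG m → BG m :=
  OreLocalization.liftExpand (fun r s => ((s : PB m) /ₒ ⟨r, trivial⟩))
    (by
      intro r t s ht
      have := OreLocalization.expand' (s : PB m) (⟨r, trivial⟩ : (⊤ : Submonoid (PB m)))
        (⟨t, trivial⟩ : (⊤ : Submonoid (PB m)))
      exact this)

lemma pb_div_self {m : ℕ} (r : PB m) : (r /ₒ (⟨r, trivial⟩ : (⊤ : Submonoid (PB m)))) = 1 := by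
  rw [OreLocalization.one_def, OreLocalization.oreDiv_eq_iff]
  exact ⟨⟨r, Submonoid.mem_top r⟩, 1, by simp [Submonoid.smul_def, smul_eq_mul], by simp⟩

noncomputable instance (m : ℕ) : Group (BG m) :=
  { (inferInstance : Monoid (OreLocalization (⊤ : Submonoid (PB m)) (PB m))) with
    inv := pbInv
    inv_mul_cancel := by
      intro a
      induction a using OreLocalization.ind with
      | _ r s =>
        show pbInv (r /ₒ s) * (r /ₒ s) = 1
        have h1 : pbInv (r /ₒ s) =
            ((s : PB m) /ₒ (⟨r, Submonoid.mem_top r⟩ : (⊤ : Submonoid (PB m)))) :=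
          OreLocalization.liftExpand_of _ _
        rw [h1, OreLocalization.oreDiv_mul_char (s : PB m) r
          (⟨r, Submonoid.mem_top r⟩ : (⊤ : Submonoid (PB m))) s 1 1 (by simp),
          one_mul, one_mul]
        exact pb_div_self r }

lemma num_inj {m : ℕ} : Function.Injective
    (OreLocalization.numeratorHom : PB m →* OreLocalization (⊤ : Submonoid (PB m)) (PB m)) := by
  intro r₁ r₂ h
  rw [OreLocalization.numeratorHom_apply, OreLocalization.numeratorHom_apply,
    OreLocalization.oreDiv_eq_iff] at h
  obtain ⟨u, v, h1, h2⟩ := h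
  have hu : (u : PB m) = v := by simpa using h2
  rw [Submonoid.smul_def, smul_eq_mul, smul_eq_mul, hu] at h1
  exact (pb_left_cancel h1).symm

end Braid

namespace Braid

/-! ### Relations in the positive braid monoid and the braid group -/

lemma pb_rel_comm {m : ℕ} {i j : Fin m} (h : (i : ℕ) + 2 ≤ (j : ℕ)) :
    (pbmk [i] : PB m) * pbmk [j] = pbmk [j] * pbmk [i] := by
  apply Quotient.sound
  show wval [i, j] ∼ wval [j, i]
  exact swap_cons (Or.inl h) []

lemma pb_rel_braid {m : ℕ} {i j : Fin m} (h : (j : ℕ) = (i : ℕ) + 1) :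
    (pbmk [i] : PB m) * pbmk [j] * pbmk [i] = pbmk [j] * pbmk [i] * pbmk [j] := by
  apply Quotient.sound
  show wval [i, j, i] ∼ wval [j, i, j]
  exact braid_cons (Or.inl h) []

section BraidGroupFacts

variable (n : ℕ)

lemma bg_relator_eq_one {r : FreeGroup (Fin (n - 1))} (hr : r ∈ braidRels (n - 1)) :
    PresentedGroup.mk (braidRels (n - 1)) r = 1 :=
  (QuotientGroup.eq_one_iff r).mpr (Subgroup.subset_normalClosure hr)

lemma bg_comm {i j : Fin (n - 1)} (h : (i : ℕ) + 2 ≤ (j : ℕ)) :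
    braidGen n i * braidGen n j = braidGen n j * braidGen n i := by
  have h1 := bg_relator_eq_one n (⟨i, j, Or.inl ⟨h, rfl⟩⟩ :
    (FreeGroup.of i * FreeGroup.of j * (FreeGroup.of i)⁻¹ * (FreeGroup.of j)⁻¹) ∈
      braidRels (n - 1))
  simp only [map_mul, map_inv] at h1
  rw [mul_inv_eq_one] at h1
  rw [mul_inv_eq_iff_eq_mul] at h1
  exact h1

lemma bg_braid {i j : Fin (n - 1)} (h : (j : ℕ) = (i : ℕ) + 1) :
    braidGen n i * braidGen n j * braidGen n i = braidGen n j * braidGen n i * braidGen n j := by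
  have h1 := bg_relator_eq_one n (⟨i, j, Or.inr ⟨h, rfl⟩⟩ :
    (FreeGroup.of i * FreeGroup.of j * FreeGroup.of i *
      (FreeGroup.of j * FreeGroup.of i * FreeGroup.of j)⁻¹) ∈ braidRels (n - 1))
  simp only [map_mul, map_inv] at h1
  rw [mul_inv_eq_one] at h1
  simp only [mul_assoc] at h1
  exact h1

/-! ### Words mapped into the braid group -/

/-- `x`-th generator of the braid group, or `1` if out of range. -/
noncomputable def gensN (x : ℕ) : BraidGroup n :=
  if h : x < n - 1 then braidGen n ⟨x, h⟩ else 1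

/-- The image in the braid group of a word of naturals. -/
noncomputable def wtgN (l : List ℕ) : BraidGroup n := (l.map (gensN n)).prod

lemma wtgN_append (u v : List ℕ) : wtgN n (u ++ v) = wtgN n u * wtgN n v := by
  simp [wtgN]

lemma wtgN_BR {x y : List ℕ} (hx : ∀ c ∈ x, c < n - 1) (h : BR x y) :
    wtgN n x = wtgN n y := by
  cases h with
  | @comm a b hab =>
    have ha : a < n - 1 := hx a (by simp)
    have hb : b < n - 1 := hx b (by simp)
    show (gensN n a) * ((gensN n b) * 1) = (gensN n b) * ((gensN n a) * 1)
    rw [mul_one, mul_one]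
    unfold gensN
    rw [dif_pos ha, dif_pos hb]
    rcases hab with h' | h'
    · exact bg_comm n h'
    · exact (bg_comm n h').symm
  | @braid a b hab =>
    have ha : a < n - 1 := hx a (by simp)
    have hb : b < n - 1 := hx b (by simp)
    show (gensN n a) * ((gensN n b) * ((gensN n a) * 1)) =
      (gensN n b) * ((gensN n a) * ((gensN n b) * 1))
    rw [mul_one, mul_one]
    unfold gensN
    rw [dif_pos ha, dif_pos hb]
    rcases hab with h' | h'
    · simpa [mul_assoc] using bg_braid n (i := ⟨a, ha⟩) (j := ⟨b, hb⟩) h'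
    · simpa [mul_assoc] using (bg_braid n (i := ⟨b, hb⟩) (j := ⟨a, ha⟩) h').symm

lemma wtgN_step {u v : List ℕ} (hu : ∀ c ∈ u, c < n - 1) (h : Step u v) :
    wtgN n u = wtgN n v := by
  obtain ⟨p, q, x, y, hr, rfl, rfl⟩ := h
  rw [wtgN_append, wtgN_append, wtgN_append, wtgN_append]
  have hx : ∀ c ∈ x, c < n - 1 := fun c hc => hu c (by simp [hc])
  rw [wtgN_BR n hx hr]

lemma wtgN_beq {u v : List ℕ} (hu : ∀ c ∈ u, c < n - 1) (h : u ∼ v) :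
    wtgN n u = wtgN n v := by
  induction h with
  | refl => rfl
  | tail hc hstep ih =>
    have hb := Beq.bound hc hu
    exact ih.trans (wtgN_step n hb hstep)

/-- The image in the braid group of a word over `Fin (n-1)`. -/
noncomputable def wtg (l : List (Fin (n - 1))) : BraidGroup n := (l.map (braidGen n)).prod

lemma wtg_eq_wtgN (l : List (Fin (n - 1))) : wtg n l = wtgN n (wval l) := by
  induction l with
  | nil => rfl
  | cons a l ih =>
    show braidGen n a * wtg n l = gensN n (a : ℕ) * wtgN n (wval l)
    rw [ih]
    congr 1
    unfold gensN
    rw [dif_pos a.isLt]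

lemma wtg_append (u v : List (Fin (n - 1))) : wtg n (u ++ v) = wtg n u * wtg n v := by
  simp [wtg]

/-! ### The homomorphism to the group of fractions -/

noncomputable def numPB : PB (n - 1) →* BG (n - 1) :=
  (OreLocalization.numeratorHom : PB (n - 1) →* OreLocalization _ _)

lemma braid_rels_hold : ∀ r ∈ braidRels (n - 1),
    FreeGroup.lift (fun i : Fin (n - 1) => numPB n (pbmk [i])) r = 1 := by
  rintro r ⟨i, j, (⟨hij, rfl⟩ | ⟨hij, rfl⟩)⟩
  · simp only [map_mul, map_inv, FreeGroup.lift_apply_of]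
    have hc : numPB n (pbmk [i]) * numPB n (pbmk [j]) =
        numPB n (pbmk [j]) * numPB n (pbmk [i]) := by
      rw [← map_mul, ← map_mul, pb_rel_comm hij]
    rw [hc]
    group
  · simp only [map_mul, map_inv, FreeGroup.lift_apply_of]
    have hc : numPB n (pbmk [i]) * numPB n (pbmk [j]) * numPB n (pbmk [i]) =
        numPB n (pbmk [j]) * numPB n (pbmk [i]) * numPB n (pbmk [j]) := by
      rw [← map_mul, ← map_mul, ← map_mul, ← map_mul, pb_rel_braid hij]
    rw [hc]
    group

noncomputable def phi : BraidGroup n →* BG (n - 1) :=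
  (PresentedGroup.toGroup (braid_rels_hold n) : PresentedGroup (braidRels (n - 1)) →* BG (n - 1))

lemma phi_braidGen (i : Fin (n - 1)) : phi n (braidGen n i) = numPB n (pbmk [i]) :=
  PresentedGroup.toGroup.of _

lemma phi_wtg (l : List (Fin (n - 1))) : phi n (wtg n l) = numPB n (pbmk l) := by
  induction l with
  | nil =>
    show phi n 1 = numPB n 1
    rw [map_one, map_one]
  | cons a l ih =>
    have : wtg n (a :: l) = braidGen n a * wtg n l := by
      show ((a :: l).map (braidGen n)).prod = _
      simp [wtg]
    rw [this, map_mul, ih, phi_braidGen]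
    rw [← map_mul]
    rfl

/-- the key injectivity transfer: equal images in the braid group give
equivalent positive words. -/
lemma wtg_inj {u v : List (Fin (n - 1))} (h : wtg n u = wtg n v) :
    wval u ∼ wval v := by
  have h2 : numPB n (pbmk u) = numPB n (pbmk v) := by
    rw [← phi_wtg, ← phi_wtg, h]
  exact Quotient.exact (num_inj h2)

end BraidGroupFacts

end Braid


/-- If a positive braid `W` satisfies `W σᵢᵐ = σⱼᵐ W` for some `m ≥ 1`,
then `W σᵢ = σⱼ W`. -/
theorem positive_conjugator_of_pow (n : ℕ) (hn : 2 ≤ n) (i j : Fin (n - 1))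
    (m : ℕ) (hm : 1 ≤ m) (W : BraidGroup n)
    (hW : W ∈ Submonoid.closure (Set.range (braidGen n)))
    (h : W * braidGen n i ^ m = braidGen n j ^ m * W) :
    W * braidGen n i = braidGen n j * W := by
  classical
  obtain ⟨l, rfl⟩ : ∃ l : List (Fin (n - 1)), Braid.wtg n l = W := by
    refine Submonoid.closure_induction ?_ ?_ ?_ hW
    · rintro x ⟨a, rfl⟩
      exact ⟨[a], by simp [Braid.wtg]⟩
    · exact ⟨[], rfl⟩
    · rintro x y _ _ ⟨u, rfl⟩ ⟨v, rfl⟩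
      exact ⟨u ++ v, Braid.wtg_append n u v⟩
  have hpow : ∀ (k : ℕ) (a : Fin (n - 1)),
      braidGen n a ^ k = Braid.wtg n (List.replicate k a) := by
    intro k a
    induction k with
    | zero => rfl
    | succ k ih =>
      rw [pow_succ', ih, List.replicate_succ]
      show _ = ((a :: List.replicate k a).map (braidGen n)).prod
      rw [List.map_cons, List.prod_cons]
      rfl
  have h1 : Braid.wtg n (l ++ List.replicate m i) =
      Braid.wtg n (List.replicate m j ++ l) := by
    rw [Braid.wtg_append, Braid.wtg_append, ← hpow, ← hpow]
    exact h
  have h2 := Braid.wtg_inj n h1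
  rw [Braid.wval_append, Braid.wval_append] at h2
  have hrep : ∀ (k : ℕ) (a : Fin (n - 1)),
      Braid.wval (List.replicate k a) = List.replicate k (a : ℕ) := by
    intro k a; simp [Braid.wval]
  rw [hrep, hrep] at h2
  have h3 := Braid.main (Braid.wval l).length (Braid.wval l) i j m hm le_rfl h2
  -- transfer back
  have h4 : Braid.wtg n (l ++ [i]) = Braid.wtg n (j :: l) := by
    rw [Braid.wtg_eq_wtgN, Braid.wtg_eq_wtgN]
    refine Braid.wtgN_beq n ?_ ?_
    · rw [Braid.wval_append]
      intro c hc
      rcases List.mem_append.mp hc with hc | hc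
      · exact Braid.wval_bound l c hc
      · simp only [Braid.wval, List.map_cons, List.map_nil] at hc
        simp at hc
        omega
    · rw [Braid.wval_append]
      show (Braid.wval l ++ Braid.wval [i]) ∼ Braid.wval (j :: l)
      have : Braid.wval [i] = [(i : ℕ)] := rfl
      rw [this]
      have : Braid.wval (j :: l) = (j : ℕ) :: Braid.wval l := rfl
      rw [this]
      exact h3
  rw [Braid.wtg_append] at h4
  have h5 : Braid.wtg n [i] = braidGen n i := by simp [Braid.wtg]
  have h6 : Braid.wtg n (j :: l) = braidGen n j * Braid.wtg n l := by
    show ((j :: l).map (braidGen n)).prod = _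
    simp [Braid.wtg]
  rw [h5, h6] at h4
  exact h4
end

section
/- Let n ≥ 2 and work in the braid monoid B_n^+ (the monoid presented by generators σ_1, …, σ_{n−1} and the braid relations). Let i, j be indices with |i − j| = 1 and let w be an element of B_n^+. If σ_j left-divides σ_i · σ_j · w (i.e., σ_i · σ_j · w = σ_j · w′ for some w′ ∈ B_n^+), then σ_i left-divides w (i.e., w = σ_i · w″ for some w″ ∈ B_n^+). -/
/-- The braid relations on the free monoid on `m` generators:
`σᵢσⱼ = σⱼσᵢ` for `|i - j| ≥ 2` and `σᵢσⱼσᵢ = σⱼσᵢσⱼ` for `j = i + 1`. -/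
def braidMonoidRels (m : ℕ) : FreeMonoid (Fin m) → FreeMonoid (Fin m) → Prop :=
  fun a b => ∃ i j : Fin m,
    ((i : ℕ) + 2 ≤ (j : ℕ) ∧ a = .of i * .of j ∧ b = .of j * .of i) ∨
    ((j : ℕ) = (i : ℕ) + 1 ∧ a = .of i * .of j * .of i ∧ b = .of j * .of i * .of j)

/-- The braid monoid `B_n⁺`, presented over `Fin (n - 1)`. -/
def BraidMonoid (n : ℕ) : Type := PresentedMonoid (braidMonoidRels (n - 1))

instance (n : ℕ) : Monoid (BraidMonoid n) := by unfold BraidMonoid; infer_instance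

/-- The positive generator `σ_{i+1}` of the braid monoid (0-indexed by `i : Fin (n - 1)`). -/
def braidMonGen (n : ℕ) (i : Fin (n - 1)) : BraidMonoid n :=
  PresentedMonoid.of (braidMonoidRels (n - 1)) i

namespace BraidAux

variable {m : ℕ}

/-- `|a - b| ≥ 2`. -/
def Far (a b : Fin m) : Prop := (a : ℕ) + 2 ≤ (b : ℕ) ∨ (b : ℕ) + 2 ≤ (a : ℕ)

/-- `|a - b| = 1`. -/
def Adj (a b : Fin m) : Prop := (a : ℕ) + 1 = (b : ℕ) ∨ (b : ℕ) + 1 = (a : ℕ)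

lemma Far.symm {a b : Fin m} (h : Far a b) : Far b a := Or.symm h
lemma Adj.symm {a b : Fin m} (h : Adj a b) : Adj b a := Or.symm h
lemma not_far_self (a : Fin m) : ¬ Far a a := by unfold Far; omega
lemma not_adj_self (a : Fin m) : ¬ Adj a a := by unfold Adj; omega
lemma far_not_adj {a b : Fin m} (h : Far a b) (h' : Adj a b) : False := by
  unfold Far at h; unfold Adj at h'; omega
lemma adj3 {a b c : Fin m} (h1 : Adj a b) (h2 : Adj a c) (h3 : Adj c b) : False := by
  unfold Adj at *; omega
lemma rel_cases (c b : Fin m) : c = b ∨ Adj c b ∨ Far c b := by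
  by_cases h : (c : ℕ) = (b : ℕ)
  · exact Or.inl (Fin.ext h)
  · refine Or.inr ?_; unfold Adj Far; omega

/-- One elementary braid rewriting step on words. -/
def Bstep (m : ℕ) (x y : List (Fin m)) : Prop :=
  ∃ (p s : List (Fin m)) (i j : Fin m),
    (Far i j ∧ x = p ++ i :: j :: s ∧ y = p ++ j :: i :: s) ∨
    (Adj i j ∧ x = p ++ i :: j :: i :: s ∧ y = p ++ j :: i :: j :: s)

lemma bstep_comm (p s : List (Fin m)) (i j : Fin m) (h : Far i j) :
    Bstep m (p ++ i :: j :: s) (p ++ j :: i :: s) := ⟨p, s, i, j, Or.inl ⟨h, rfl, rfl⟩⟩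

lemma bstep_braid (p s : List (Fin m)) (i j : Fin m) (h : Adj i j) :
    Bstep m (p ++ i :: j :: i :: s) (p ++ j :: i :: j :: s) := ⟨p, s, i, j, Or.inr ⟨h, rfl, rfl⟩⟩

lemma bstep_symm {x y : List (Fin m)} (h : Bstep m x y) : Bstep m y x := by
  obtain ⟨p, s, i, j, ⟨hf, rfl, rfl⟩ | ⟨ha, rfl, rfl⟩⟩ := h
  · exact bstep_comm p s j i hf.symm
  · exact bstep_braid p s j i ha.symm

lemma bstep_length {x y : List (Fin m)} (h : Bstep m x y) : x.length = y.length := by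
  obtain ⟨p, s, i, j, ⟨hf, rfl, rfl⟩ | ⟨ha, rfl, rfl⟩⟩ := h <;> simp

lemma bstep_cons (x : Fin m) {u v : List (Fin m)} (h : Bstep m u v) :
    Bstep m (x :: u) (x :: v) := by
  obtain ⟨p, s, i, j, ⟨hf, rfl, rfl⟩ | ⟨ha, rfl, rfl⟩⟩ := h
  · exact bstep_comm (x :: p) s i j hf
  · exact bstep_braid (x :: p) s i j ha

lemma bstep_append_right (s : List (Fin m)) {u v : List (Fin m)} (h : Bstep m u v) :
    Bstep m (u ++ s) (v ++ s) := by
  obtain ⟨p, s', i, j, ⟨hf, rfl, rfl⟩ | ⟨ha, rfl, rfl⟩⟩ := h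
  · simpa using bstep_comm p (s' ++ s) i j hf
  · simpa using bstep_braid p (s' ++ s) i j ha

lemma bstep_append_left (p : List (Fin m)) {u v : List (Fin m)} (h : Bstep m u v) :
    Bstep m (p ++ u) (p ++ v) := by
  induction p with
  | nil => exact h
  | cons x p ih => exact bstep_cons x ih

/-- Braid-equivalence of words. -/
abbrev Beq (m : ℕ) : List (Fin m) → List (Fin m) → Prop := Relation.ReflTransGen (Bstep m)

lemma beq_symm {x y : List (Fin m)} (h : Beq m x y) : Beq m y x := by
  induction h with
  | refl => exact .refl
  | tail _ h2 ih => exact (Relation.ReflTransGen.single (bstep_symm h2)).trans ih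

lemma beq_length {x y : List (Fin m)} (h : Beq m x y) : x.length = y.length := by
  induction h with
  | refl => rfl
  | tail _ h2 ih => exact ih.trans (bstep_length h2)

lemma beq_cons (x : Fin m) {u v : List (Fin m)} (h : Beq m u v) : Beq m (x :: u) (x :: v) := by
  induction h with
  | refl => exact .refl
  | tail _ h2 ih => exact ih.tail (bstep_cons x h2)

lemma beq_append_right (s : List (Fin m)) {u v : List (Fin m)} (h : Beq m u v) :
    Beq m (u ++ s) (v ++ s) := by
  induction h with
  | refl => exact .refl
  | tail _ h2 ih => exact ih.tail (bstep_append_right s h2)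

lemma beq_append_left (p : List (Fin m)) {u v : List (Fin m)} (h : Beq m u v) :
    Beq m (p ++ u) (p ++ v) := by
  induction h with
  | refl => exact .refl
  | tail _ h2 ih => exact ih.tail (bstep_append_left p h2)

lemma beq_append {a b c d : List (Fin m)} (h1 : Beq m a b) (h2 : Beq m c d) :
    Beq m (a ++ c) (b ++ d) := (beq_append_right c h1).trans (beq_append_left b h2)

lemma beq_swap {i j : Fin m} (h : Far i j) (s : List (Fin m)) :
    Beq m (i :: j :: s) (j :: i :: s) := Relation.ReflTransGen.single (bstep_comm [] s i j h)

lemma beq_braid {i j : Fin m} (h : Adj i j) (s : List (Fin m)) :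
    Beq m (i :: j :: i :: s) (j :: i :: j :: s) := Relation.ReflTransGen.single (bstep_braid [] s i j h)

/-- Braid-equivalence with counted steps. -/
inductive EqN (m : ℕ) : ℕ → List (Fin m) → List (Fin m) → Prop
  | zero (x : List (Fin m)) : EqN m 0 x x
  | succ {k : ℕ} {x y z : List (Fin m)} : Bstep m x y → EqN m k y z → EqN m (k + 1) x z

lemma beq_exists_eqN {x y : List (Fin m)} (h : Beq m x y) : ∃ k, EqN m k x y := by
  induction h using Relation.ReflTransGen.head_induction_on with
  | refl => exact ⟨0, .zero _⟩
  | head h1 _ ih => obtain ⟨k, hk⟩ := ih; exact ⟨k + 1, .succ h1 hk⟩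

lemma eqN_beq {k : ℕ} {x y : List (Fin m)} (h : EqN m k x y) : Beq m x y := by
  induction h with
  | zero => exact .refl
  | succ h1 _ ih => exact (Relation.ReflTransGen.single h1).trans ih

lemma eqN_cases {k : ℕ} {x y : List (Fin m)} (h : EqN m k x y) :
    (k = 0 ∧ x = y) ∨ ∃ k' z, k = k' + 1 ∧ Bstep m x z ∧ EqN m k' z y := by
  cases h with
  | zero => exact Or.inl ⟨rfl, rfl⟩
  | succ h1 h2 => exact Or.inr ⟨_, _, rfl, h1, h2⟩

lemma bstep_cons_cases {a : Fin m} {u z : List (Fin m)} (h : Bstep m (a :: u) z) :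
    (∃ u1, z = a :: u1 ∧ Bstep m u u1) ∨
    (∃ c u2, Far a c ∧ u = c :: u2 ∧ z = c :: a :: u2) ∨
    (∃ c u2, Adj a c ∧ u = c :: a :: u2 ∧ z = c :: a :: c :: u2) := by
  obtain ⟨p, s, i, j, ⟨hf, hx, rfl⟩ | ⟨ha, hx, rfl⟩⟩ := h
  · cases p with
    | nil =>
      simp only [List.nil_append, List.cons.injEq] at hx
      obtain ⟨rfl, rfl⟩ := hx
      exact Or.inr (Or.inl ⟨j, s, hf, rfl, rfl⟩)
    | cons x p =>
      simp only [List.cons_append, List.cons.injEq] at hx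
      obtain ⟨rfl, rfl⟩ := hx
      exact Or.inl ⟨p ++ j :: i :: s, rfl, bstep_comm p s i j hf⟩
  · cases p with
    | nil =>
      simp only [List.nil_append, List.cons.injEq] at hx
      obtain ⟨rfl, rfl⟩ := hx
      exact Or.inr (Or.inr ⟨j, s, ha, rfl, rfl⟩)
    | cons x p =>
      simp only [List.cons_append, List.cons.injEq] at hx
      obtain ⟨rfl, rfl⟩ := hx
      exact Or.inl ⟨p ++ j :: i :: j :: s, rfl, bstep_braid p s i j ha⟩

/-- The conclusion of Garside's key lemma. -/
@[reducible] def Cl (m : ℕ) (a b : Fin m) (u v : List (Fin m)) : Prop :=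
  (a = b → Beq m u v) ∧
  (Far a b → ∃ t, Beq m u (b :: t) ∧ Beq m v (a :: t)) ∧
  (Adj a b → ∃ t, Beq m u (b :: a :: t) ∧ Beq m v (a :: b :: t))



theorem key : ∀ (n k : ℕ) (u v : List (Fin m)) (a b : Fin m),
    u.length = n → EqN m k (a :: u) (b :: v) → Cl m a b u v := by
  intro n
  induction n using Nat.strong_induction_on with
  | _ n ihn =>
  intro k
  induction k using Nat.strong_induction_on with
  | _ k ihk =>
  intro u v a b hlen h
  have KS : ∀ (u' v' : List (Fin m)) (a' b' : Fin m), u'.length < n →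
      Beq m (a' :: u') (b' :: v') → Cl m a' b' u' v' := by
    intro u' v' a' b' hl hb
    obtain ⟨k', hk'⟩ := beq_exists_eqN hb
    exact ihn _ hl k' u' v' a' b' rfl hk'
  rcases eqN_cases h with ⟨rfl, heq⟩ | ⟨k', z, rfl, hstep, htail⟩
  · injection heq with h1 h2
    subst h1; subst h2
    exact ⟨fun _ => .refl, fun hf => absurd hf (not_far_self _),
           fun ha => absurd ha (not_adj_self _)⟩
  · rcases bstep_cons_cases hstep with ⟨u1, rfl, hs⟩ | ⟨c, u2, hac, rfl, rfl⟩ |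
      ⟨c, u2, hac, rfl, rfl⟩
    · -- the step happens inside the tail
      have hl1 : u1.length = n := by have := bstep_length hs; omega
      have T := ihk k' (by omega) u1 v a b hl1 htail
      have s1 : Beq m u u1 := Relation.ReflTransGen.single hs
      exact ⟨fun he => s1.trans (T.1 he),
             fun hf => let ⟨t, h1, h2⟩ := T.2.1 hf; ⟨t, s1.trans h1, h2⟩,
             fun ha => let ⟨t, h1, h2⟩ := T.2.2 ha; ⟨t, s1.trans h1, h2⟩⟩
    · -- front commutation step : u = c::u2, Far a c, z = c::a::u2
      have hn2 : u2.length + 1 = n := by simpa using hlen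
      have T := ihk k' (by omega) (a :: u2) v c b (by simp; omega) htail
      have hca : Far c a := hac.symm
      refine ⟨?_, ?_, ?_⟩
      · rintro rfl
        obtain ⟨t, h1, h2⟩ := T.2.1 hca
        have h3 : Beq m u2 t := (KS u2 t a a (by omega) h1).1 rfl
        exact beq_symm (h2.trans (beq_cons c (beq_symm h3)))
      · intro hab
        have hba : Far b a := hab.symm
        rcases rel_cases c b with rfl | hcb | hcb
        · exact ⟨u2, .refl, beq_symm (T.1 rfl)⟩
        · obtain ⟨t1, h1, h2⟩ := T.2.2 hcb
          obtain ⟨s, hs1, hs2⟩ := (KS u2 _ a b (by omega) h1).2.1 hab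
          have lt1 : t1.length < n := by have := beq_length h1; simp at this; omega
          obtain ⟨q, hq1, hq2⟩ := (KS t1 s c a lt1 hs2).2.1 hca
          refine ⟨c :: b :: q, ?_, ?_⟩
          · exact (beq_cons c (hs1.trans (beq_cons b hq2))).trans (beq_braid hcb q)
          · exact h2.trans ((beq_cons c (beq_cons b hq1)).trans
              ((beq_cons c (beq_swap hba q)).trans (beq_swap hca (b :: q))))
        · obtain ⟨t1, h1, h2⟩ := T.2.1 hcb
          obtain ⟨s, hs1, hs2⟩ := (KS u2 t1 a b (by omega) h1).2.1 hab
          refine ⟨c :: s, ?_, ?_⟩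
          · exact (beq_cons c hs1).trans (beq_swap hcb s)
          · exact h2.trans ((beq_cons c hs2).trans (beq_swap hca s))
      · intro hab
        have hba : Adj b a := hab.symm
        rcases rel_cases c b with rfl | hcb | hcb
        · exact (far_not_adj hac hab).elim
        · obtain ⟨t1, h1, h2⟩ := T.2.2 hcb
          obtain ⟨s, hs1, hs2⟩ := (KS u2 _ a b (by omega) h1).2.2 hab
          have lt1 : t1.length < n := by have := beq_length h1; simp at this; omega
          obtain ⟨q, hq1, hq2⟩ := (KS t1 _ c a lt1 hs2).2.1 hca
          have ls : s.length < n := by have := beq_length hs2; simp at this; omega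
          obtain ⟨p, hp1, hp2⟩ := (KS s q b c ls hq2).2.2 hcb.symm
          refine ⟨c :: b :: a :: p, ?_, ?_⟩
          · exact (beq_cons c hs1).trans ((beq_cons c (beq_cons b (beq_cons a hp1))).trans
              ((beq_cons c (beq_cons b (beq_swap hac (b :: p)))).trans
              ((beq_braid hcb (a :: b :: p)).trans
              ((beq_cons b (beq_cons c (beq_braid hba p))).trans
              (beq_cons b (beq_swap hca (b :: a :: p)))))))
          · exact h2.trans ((beq_cons c (beq_cons b hq1)).trans
              ((beq_cons c (beq_cons b (beq_cons a hp2))).trans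
              ((beq_cons c (beq_braid hba (c :: p))).trans
              ((beq_swap hca (b :: a :: c :: p)).trans
              ((beq_cons a (beq_cons c (beq_cons b (beq_swap hac p)))).trans
              (beq_cons a (beq_braid hcb (a :: p))))))))
        · obtain ⟨t1, h1, h2⟩ := T.2.1 hcb
          obtain ⟨s, hs1, hs2⟩ := (KS u2 t1 a b (by omega) h1).2.2 hab
          refine ⟨c :: s, ?_, ?_⟩
          · exact (beq_cons c hs1).trans ((beq_swap hcb (a :: s)).trans
              (beq_cons b (beq_swap hca s)))
          · exact h2.trans ((beq_cons c hs2).trans ((beq_swap hca (b :: s)).trans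
              (beq_cons a (beq_swap hcb s))))
    · -- front braid step : u = c::a::u2, Adj a c, z = c::a::c::u2
      have hn2 : u2.length + 2 = n := by simpa using hlen
      have T := ihk k' (by omega) (a :: c :: u2) v c b (by simp; omega) htail
      have hca : Adj c a := hac.symm
      refine ⟨?_, ?_, ?_⟩
      · rintro rfl
        obtain ⟨t1, h1, h2⟩ := T.2.2 hca
        have h3 : Beq m (c :: u2) (c :: t1) := (KS _ _ a a (by simp; omega) h1).1 rfl
        have h4 : Beq m u2 t1 := (KS u2 t1 c c (by omega) h3).1 rfl
        exact beq_symm (h2.trans (beq_cons c (beq_cons a (beq_symm h4))))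
      · intro hab
        have hba : Far b a := hab.symm
        rcases rel_cases c b with rfl | hcb | hcb
        · exact (far_not_adj hab hac).elim
        · obtain ⟨t1, h1, h2⟩ := T.2.2 hcb
          obtain ⟨s, hs1, hs2⟩ := (KS (c :: u2) _ a b (by simp; omega) h1).2.1 hab
          have ls : s.length < n := by have := beq_length hs1; simp at this; omega
          obtain ⟨q, hq1, hq2⟩ := (KS u2 s c b (by omega) hs1).2.2 hcb
          have lt1 : t1.length < n := by have := beq_length h1; simp at this; omega
          obtain ⟨p, hp1, hp2⟩ := (KS t1 s c a lt1 hs2).2.2 hca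
          have hqp : Beq m (c :: b :: q) (c :: a :: p) := (beq_symm hq2).trans hp2
          have lbq : (b :: q).length < n := by
            have := beq_length hq2; simp at this ⊢; omega
          have hqp2 : Beq m (b :: q) (a :: p) := (KS _ _ c c lbq hqp).1 rfl
          have lq : q.length < n := by have := beq_length hq2; simp at this; omega
          obtain ⟨r, hr1, hr2⟩ := (KS q p b a lq hqp2).2.1 hba
          refine ⟨c :: b :: a :: c :: r, ?_, ?_⟩
          · exact (beq_cons c (beq_cons a hq1)).trans
              ((beq_cons c (beq_cons a (beq_cons b (beq_cons c hr1)))).trans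
              ((beq_cons c (beq_swap hab (c :: a :: r))).trans
              ((beq_cons c (beq_cons b (beq_braid hac r))).trans
              (beq_braid hcb (a :: c :: r)))))
          · exact h2.trans ((beq_cons c (beq_cons b hp1)).trans
              ((beq_cons c (beq_cons b (beq_cons a (beq_cons c hr2)))).trans
              ((beq_cons c (beq_swap hba (c :: b :: r))).trans
              ((beq_cons c (beq_cons a (beq_braid hcb.symm r))).trans
              ((beq_braid hca (b :: c :: r)).trans
              (beq_cons a (beq_cons c (beq_swap hab (c :: r)))))))))
        · obtain ⟨t1, h1, h2⟩ := T.2.1 hcb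
          obtain ⟨s, hs1, hs2⟩ := (KS (c :: u2) t1 a b (by simp; omega) h1).2.1 hab
          obtain ⟨q, hq1, hq2⟩ := (KS u2 s c b (by omega) hs1).2.1 hcb
          refine ⟨c :: a :: q, ?_, ?_⟩
          · exact (beq_cons c (beq_cons a hq1)).trans
              ((beq_cons c (beq_swap hab q)).trans (beq_swap hcb (a :: q)))
          · exact h2.trans ((beq_cons c hs2).trans
              ((beq_cons c (beq_cons a hq2)).trans (beq_braid hca q)))
      · intro hab
        have hba : Adj b a := hab.symm
        rcases rel_cases c b with rfl | hcb | hcb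
        · exact ⟨u2, .refl, beq_symm (T.1 rfl)⟩
        · exact (adj3 hab hac hcb).elim
        · obtain ⟨t1, h1, h2⟩ := T.2.1 hcb
          obtain ⟨s, hs1, hs2⟩ := (KS (c :: u2) t1 a b (by simp; omega) h1).2.2 hab
          obtain ⟨q, hq1, hq2⟩ := (KS u2 _ c b (by omega) hs1).2.1 hcb
          have ls : s.length < n := by have := beq_length hs1; simp at this; omega
          obtain ⟨p, hp1, hp2⟩ := (KS s q a c ls hq2).2.2 hac
          refine ⟨c :: a :: b :: p, ?_, ?_⟩
          · exact (beq_cons c (beq_cons a hq1)).trans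
              ((beq_cons c (beq_cons a (beq_cons b hp2))).trans
              ((beq_cons c (beq_braid hab (c :: p))).trans
              ((beq_swap hcb (a :: b :: c :: p)).trans
              ((beq_cons b (beq_cons c (beq_cons a (beq_swap hcb.symm p)))).trans
              (beq_cons b (beq_braid hca (b :: p)))))))
          · exact h2.trans ((beq_cons c hs2).trans
              ((beq_cons c (beq_cons a (beq_cons b hp1))).trans
              ((beq_cons c (beq_cons a (beq_swap hcb.symm (a :: p)))).trans
              ((beq_braid hca (b :: a :: p)).trans
              ((beq_cons a (beq_cons c (beq_braid hab p))).trans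
              (beq_cons a (beq_swap hcb (a :: b :: p))))))))


lemma key' {u v : List (Fin m)} {a b : Fin m} (h : Beq m (a :: u) (b :: v)) : Cl m a b u v := by
  obtain ⟨k, hk⟩ := beq_exists_eqN h
  exact key u.length k u v a b rfl hk

lemma conGen_of_pair (p s L R : List (Fin m))
    (base : ConGen.Rel (braidMonoidRels m) (FreeMonoid.ofList L) (FreeMonoid.ofList R)) :
    ConGen.Rel (braidMonoidRels m) (.ofList (p ++ L ++ s)) (.ofList (p ++ R ++ s)) := by
  have h := ConGen.Rel.mul (ConGen.Rel.mul (ConGen.Rel.refl (FreeMonoid.ofList p)) base)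
    (ConGen.Rel.refl (FreeMonoid.ofList s))
  simpa [← FreeMonoid.ofList_append] using h

lemma bstep_conGen {x y : List (Fin m)} (h : Bstep m x y) :
    ConGen.Rel (braidMonoidRels m) (.ofList x) (.ofList y) := by
  obtain ⟨p, s, i, j, ⟨hf, rfl, rfl⟩ | ⟨ha, rfl, rfl⟩⟩ := h
  · have e1 : p ++ i :: j :: s = p ++ [i, j] ++ s := by simp
    have e2 : p ++ j :: i :: s = p ++ [j, i] ++ s := by simp
    rw [e1, e2]
    refine conGen_of_pair _ _ _ _ ?_
    rcases hf with h | h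
    · exact ConGen.Rel.of _ _ ⟨i, j, Or.inl ⟨h, rfl, rfl⟩⟩
    · exact ConGen.Rel.symm (ConGen.Rel.of _ _ ⟨j, i, Or.inl ⟨h, rfl, rfl⟩⟩)
  · have e1 : p ++ i :: j :: i :: s = p ++ [i, j, i] ++ s := by simp
    have e2 : p ++ j :: i :: j :: s = p ++ [j, i, j] ++ s := by simp
    rw [e1, e2]
    refine conGen_of_pair _ _ _ _ ?_
    rcases ha with h | h
    · exact ConGen.Rel.of _ _ ⟨i, j, Or.inr ⟨h.symm, rfl, rfl⟩⟩
    · exact ConGen.Rel.symm (ConGen.Rel.of _ _ ⟨j, i, Or.inr ⟨h.symm, rfl, rfl⟩⟩)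

lemma beq_conGen {x y : List (Fin m)} (h : Beq m x y) :
    ConGen.Rel (braidMonoidRels m) (.ofList x) (.ofList y) := by
  induction h with
  | refl => exact ConGen.Rel.refl _
  | tail _ h2 ih => exact ConGen.Rel.trans ih (bstep_conGen h2)

def beqCon (m : ℕ) : Con (FreeMonoid (Fin m)) where
  r x y := Beq m x.toList y.toList
  iseqv := ⟨fun _ => .refl, beq_symm, fun h1 h2 => h1.trans h2⟩
  mul' := fun h1 h2 => beq_append h1 h2

lemma conGen_beq {x y : FreeMonoid (Fin m)} (h : ConGen.Rel (braidMonoidRels m) x y) :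
    Beq m x.toList y.toList := by
  have hle : conGen (braidMonoidRels m) ≤ beqCon m := by
    apply Con.conGen_le.mpr
    rintro x y ⟨i, j, ⟨hij, rfl, rfl⟩ | ⟨hij, rfl, rfl⟩⟩
    · exact beq_swap (Or.inl hij) []
    · exact beq_braid (Or.inl hij.symm) []
  exact hle h

theorem aux (i j : Fin m) (hij : Adj i j)
    (w w' : PresentedMonoid (braidMonoidRels m))
    (h : PresentedMonoid.of (braidMonoidRels m) i * PresentedMonoid.of (braidMonoidRels m) j * w
       = PresentedMonoid.of (braidMonoidRels m) j * w') :
    ∃ w'', w = PresentedMonoid.of (braidMonoidRels m) i * w'' := by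
  obtain ⟨W, rfl⟩ := PresentedMonoid.surjective_mk w
  obtain ⟨W', rfl⟩ := PresentedMonoid.surjective_mk w'
  have h2 : PresentedMonoid.mk (braidMonoidRels m) (FreeMonoid.of i * FreeMonoid.of j * W)
      = PresentedMonoid.mk (braidMonoidRels m) (FreeMonoid.of j * W') := by
    simpa [PresentedMonoid.of, map_mul] using h
  have h3 : ConGen.Rel (braidMonoidRels m) (FreeMonoid.of i * FreeMonoid.of j * W)
      (FreeMonoid.of j * W') := Quotient.exact h2
  have h4 : Beq m (i :: j :: FreeMonoid.toList W) (j :: FreeMonoid.toList W') := conGen_beq h3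
  obtain ⟨t, h5, -⟩ := (key' h4).2.2 hij
  have h6 : Beq m (FreeMonoid.toList W) (i :: t) := (key' h5).1 rfl
  refine ⟨PresentedMonoid.mk _ (FreeMonoid.ofList t), ?_⟩
  have h7 : ConGen.Rel (braidMonoidRels m) W (FreeMonoid.of i * FreeMonoid.ofList t) :=
    beq_conGen h6
  calc PresentedMonoid.mk (braidMonoidRels m) W
      = PresentedMonoid.mk _ (FreeMonoid.of i * FreeMonoid.ofList t) := Quotient.sound h7
    _ = _ := by rw [map_mul]; rfl

end BraidAux

/-- In the braid monoid, if `|i - j| = 1` and `σⱼ` left-divides `σᵢ σⱼ w`,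
then `σᵢ` left-divides `w`. -/
theorem braidMonoid_left_dvd_of_left_dvd (n : ℕ) (hn : 2 ≤ n) (i j : Fin (n - 1))
    (hij : (i : ℕ) + 1 = (j : ℕ) ∨ (j : ℕ) + 1 = (i : ℕ)) (w : BraidMonoid n)
    (h : ∃ w', braidMonGen n i * braidMonGen n j * w = braidMonGen n j * w') :
    ∃ w'', w = braidMonGen n i * w'' := by
  obtain ⟨w', hw⟩ := h
  exact BraidAux.aux i j hij w w' hw
end
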